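/- The groups G = ⟨x₁, x₂, x₃ | x₁x₂x₁⁻¹x₂⁻¹x₁x₂, x₃x₂x₃⁻¹x₂⁻¹x₃x₂⟩ and G' = ⟨x₁, x₂, x₃ | x₁x₂x₁⁻¹x₂⁻¹x₁x₂, x₃x₂⁻¹x₃⁻¹x₂x₃x₂⁻¹⟩ are not isomorphic. -/

import Mathlib

/-- Relators r₁ = x₁x₂x₁⁻¹x₂⁻¹x₁x₂ and r₂ = x₃x₂x₃⁻¹x₂⁻¹x₃x₂,
where `0 = x₁`, `1 = x₂`, `2 = x₃`. -/
def relsG : Set (FreeGroup (Fin 3)) :=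
  { FreeGroup.of 0 * FreeGroup.of 1 * (FreeGroup.of 0)⁻¹ * (FreeGroup.of 1)⁻¹ *
      FreeGroup.of 0 * FreeGroup.of 1,
    FreeGroup.of 2 * FreeGroup.of 1 * (FreeGroup.of 2)⁻¹ * (FreeGroup.of 1)⁻¹ *
      FreeGroup.of 2 * FreeGroup.of 1 }

/-- Relators r₁ = x₁x₂x₁⁻¹x₂⁻¹x₁x₂ and r₃ = x₃x₂⁻¹x₃⁻¹x₂x₃x₂⁻¹. -/
def relsG' : Set (FreeGroup (Fin 3)) :=
  { FreeGroup.of 0 * FreeGroup.of 1 * (FreeGroup.of 0)⁻¹ * (FreeGroup.of 1)⁻¹ *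
      FreeGroup.of 0 * FreeGroup.of 1,
    FreeGroup.of 2 * (FreeGroup.of 1)⁻¹ * (FreeGroup.of 2)⁻¹ * FreeGroup.of 1 *
      FreeGroup.of 2 * (FreeGroup.of 1)⁻¹ }

/-- G = ⟨x₁, x₂, x₃ | r₁, r₂⟩. -/
def GroupG : Type := PresentedGroup relsG

/-- G' = ⟨x₁, x₂, x₃ | r₁, r₃⟩. -/
def GroupG' : Type := PresentedGroup relsG'

instance : Group GroupG := by unfold GroupG; infer_instance
instance : Group GroupG' := by unfold GroupG'; infer_instance

/-! ### Auxiliary material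

We distinguish the two groups by counting homomorphisms into the finite group
`F20 = ℤ/5 ⋊ ℤ/4` (the generator of `ℤ/4` acting on `ℤ/5` by multiplication by 2):
`G` admits 140 homomorphisms into `F20` while `G'` admits only 60. -/

set_option maxHeartbeats 4000000
set_option maxRecDepth 20000

/-- Multiplication for `ℤ/5 ⋊ ℤ/4`, elements encoded as `a + 5*x`, `a : ℤ/5`, `x : ℤ/4`. -/
def fmul (m n : Nat) : Nat :=
  (m % 5 + 2 ^ (m / 5) * (n % 5)) % 5 + 5 * ((m / 5 + n / 5) % 4)

/-- Inversion: the inverse of `(a,x)` is `(-(2^(-x) * a), -x)`. -/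
def finv (m : Nat) : Nat :=
  (5 - (2 ^ ((4 - m / 5) % 4) * (m % 5)) % 5) % 5 + 5 * ((4 - m / 5) % 4)

lemma fmul_lt (m n : Nat) : fmul m n < 20 := by
  unfold fmul
  have h1 : (m % 5 + 2 ^ (m / 5) * (n % 5)) % 5 < 5 := Nat.mod_lt _ (by norm_num)
  have h2 : (m / 5 + n / 5) % 4 < 4 := Nat.mod_lt _ (by norm_num)
  omega

lemma finv_lt (m : Nat) : finv m < 20 := by
  unfold finv
  have h1 : (5 - (2 ^ ((4 - m / 5) % 4) * (m % 5)) % 5) % 5 < 5 := Nat.mod_lt _ (by norm_num)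
  have h2 : (4 - m / 5) % 4 < 4 := Nat.mod_lt _ (by norm_num)
  omega

lemma fmul_assoc : ∀ m < 20, ∀ n < 20, ∀ k < 20,
    fmul (fmul m n) k = fmul m (fmul n k) := by decide

lemma fmul_one_mul : ∀ m < 20, fmul 0 m = m := by decide
lemma fmul_mul_one : ∀ m < 20, fmul m 0 = m := by decide
lemma fmul_inv_mul : ∀ m < 20, fmul (finv m) m = 0 := by decide

/-- The group `F20 = ℤ/5 ⋊ ℤ/4`. -/
def H : Type := Fin 20

instance : DecidableEq H := by unfold H; infer_instance
instance : Fintype H := by unfold H; infer_instance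

instance : Group H where
  mul m n := (⟨fmul m.val n.val, fmul_lt _ _⟩ : Fin 20)
  one := (⟨0, by norm_num⟩ : Fin 20)
  inv m := (⟨finv m.val, finv_lt _⟩ : Fin 20)
  mul_assoc a b c := Fin.ext (fmul_assoc _ a.2 _ b.2 _ c.2)
  one_mul a := Fin.ext (fmul_one_mul _ a.2)
  mul_one a := Fin.ext (fmul_mul_one _ a.2)
  inv_mul_cancel a := Fin.ext (fmul_inv_mul _ a.2)

/-- Value of the relator word `a b a⁻¹ b⁻¹ a b`. -/
def rel₁ (a b : H) : H := a * b * a⁻¹ * b⁻¹ * a * b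
/-- Value of the relator word `a b⁻¹ a⁻¹ b a b⁻¹`. -/
def rel₃ (a b : H) : H := a * b⁻¹ * a⁻¹ * b * a * b⁻¹

lemma cardSG : Fintype.card
    {t : H × H × H // rel₁ t.1 t.2.1 = 1 ∧ rel₁ t.2.2 t.2.1 = 1} = 140 := by decide

lemma cardSG' : Fintype.card
    {t : H × H × H // rel₁ t.1 t.2.1 = 1 ∧ rel₃ t.2.2 t.2.1 = 1} = 60 := by decide

section
variable {α K : Type*} [Group K] (rels : Set (FreeGroup α))

lemma lift_eq_comp_mk (φ : PresentedGroup rels →* K) (r : FreeGroup α) :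
    FreeGroup.lift (fun i => φ (PresentedGroup.of i)) r = φ (QuotientGroup.mk r) := by
  have : φ.comp (QuotientGroup.mk' (Subgroup.normalClosure rels)) r
      = FreeGroup.lift (fun i => φ (PresentedGroup.of i)) r :=
    FreeGroup.lift_unique _ (fun x => rfl)
  exact this.symm

/-- Homomorphisms out of a presented group correspond to maps of the generators
killing all relators. -/
def homEquiv : (PresentedGroup rels →* K) ≃
    {p : α → K // ∀ r ∈ rels, FreeGroup.lift p r = 1} where
  toFun φ := ⟨fun i => φ (PresentedGroup.of i), by
    intro r hr
    rw [lift_eq_comp_mk, (QuotientGroup.eq_one_iff r).mpr (Subgroup.subset_normalClosure hr)]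
    exact map_one φ⟩
  invFun p := PresentedGroup.toGroup p.2
  left_inv φ := by
    ext x
    exact (PresentedGroup.toGroup.unique _ φ (fun i => rfl)).symm
  right_inv p := by
    ext i
    exact PresentedGroup.toGroup.of p.2

end

def tripEquiv : (Fin 3 → H) ≃ H × H × H where
  toFun p := (p 0, p 1, p 2)
  invFun t := ![t.1, t.2.1, t.2.2]
  left_inv p := by funext i; fin_cases i <;> rfl
  right_inv t := rfl

lemma satG_iff (p : Fin 3 → H) :
    (∀ r ∈ relsG, FreeGroup.lift p r = 1) ↔
      (rel₁ (p 0) (p 1) = 1 ∧ rel₁ (p 2) (p 1) = 1) := by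
  simp [relsG, rel₁]

lemma satG'_iff (p : Fin 3 → H) :
    (∀ r ∈ relsG', FreeGroup.lift p r = 1) ↔
      (rel₁ (p 0) (p 1) = 1 ∧ rel₃ (p 2) (p 1) = 1) := by
  simp [relsG', rel₁, rel₃]

def subEquivG : {p : Fin 3 → H // ∀ r ∈ relsG, FreeGroup.lift p r = 1} ≃
    {t : H × H × H // rel₁ t.1 t.2.1 = 1 ∧ rel₁ t.2.2 t.2.1 = 1} :=
  Equiv.subtypeEquiv tripEquiv (fun p => satG_iff p)

def subEquivG' : {p : Fin 3 → H // ∀ r ∈ relsG', FreeGroup.lift p r = 1} ≃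
    {t : H × H × H // rel₁ t.1 t.2.1 = 1 ∧ rel₃ t.2.2 t.2.1 = 1} :=
  Equiv.subtypeEquiv tripEquiv (fun p => satG'_iff p)

theorem G_not_iso_G' : ¬ Nonempty (GroupG ≃* GroupG') := by
  rintro ⟨e⟩
  have homComp : (PresentedGroup relsG →* H) ≃ (PresentedGroup relsG' →* H) :=
    { toFun := fun φ => φ.comp (e.symm.toMonoidHom : GroupG' →* GroupG)
      invFun := fun ψ => ψ.comp (e.toMonoidHom : GroupG →* GroupG')
      left_inv := fun φ => by ext x; exact congrArg φ (e.symm_apply_apply _)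
      right_inv := fun ψ => by ext x; exact congrArg ψ (e.apply_symm_apply _) }
  have big := subEquivG.symm.trans ((homEquiv relsG).symm.trans
    (homComp.trans ((homEquiv relsG').trans subEquivG')))
  have hcard := Fintype.card_congr big
  rw [cardSG, cardSG'] at hcard
  exact absurd hcard (by norm_num)
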